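/- For every real t > 0, one has (t² − 1)·(2·arctan(t) − π) + 2t > 0. -/
import Mathlib

lemma arctan_lt_self_aux {x : ℝ} (hx : 0 < x) : Real.arctan x < x := by
  have h1 : 0 < Real.arctan x := by simpa using Real.arctan_strictMono hx
  have h2 : Real.arctan x < Real.pi / 2 := Real.arctan_lt_pi_div_two x
  have := Real.lt_tan h1 h2
  rwa [Real.tan_arctan] at this

/-- For every real `t > 0`, `(t² − 1)·(2·arctan t − π) + 2·t > 0`. -/
theorem halfCauchy_key_inequality (t : ℝ) (ht : 0 < t) :
    0 < (t ^ 2 - 1) * (2 * Real.arctan t - Real.pi) + 2 * t := by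
  have hinv : Real.arctan t⁻¹ = Real.pi / 2 - Real.arctan t := Real.arctan_inv_of_pos ht
  have key : (t ^ 2 - 1) * Real.arctan t⁻¹ < t := by
    rcases le_or_gt t 1 with h | h
    · have h1 : t ^ 2 - 1 ≤ 0 := by nlinarith
      have h2 : 0 ≤ Real.arctan t⁻¹ := by simpa using (Real.arctan_strictMono.monotone (by positivity : (0:ℝ) ≤ t⁻¹))
      nlinarith
    · have h1 : Real.arctan t⁻¹ < t⁻¹ := arctan_lt_self_aux (by positivity)
      have h2 : 0 < t ^ 2 - 1 := by nlinarith
      have h3 : (t ^ 2 - 1) * Real.arctan t⁻¹ < (t ^ 2 - 1) * t⁻¹ :=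
        mul_lt_mul_of_pos_left h1 h2
      have h4 : (t ^ 2 - 1) * t⁻¹ < t := by
        rw [← div_eq_mul_inv, div_lt_iff₀ ht]
        nlinarith
      linarith
  have : (t ^ 2 - 1) * (2 * Real.arctan t - Real.pi) = -2 * ((t ^ 2 - 1) * Real.arctan t⁻¹) := by
    rw [hinv]; ring
  nlinarith
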